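/- Let Y ∈ ℝ^{N×M} be a 0/1 label matrix with Y_{v,i} = 𝟙[y_v = i], where each class i has exactly c = N/M nodes. Let C ∈ ℝ^{N×M} with C_{v,i} = (1/c)·𝟙[y_v = i], and let A₂ be the 0/1 adjacency matrix of a graph where each vertex has neighborhood N₂(v). Then ‖Y − A₂C‖_F² ≤ N + (M²/N)·Σ_v Σ_{u ∈ N₂(v)} 𝟙[y_u ≠ y_v], provided each vertex's neighbor label sums satisfy Σ_{u∈N₂(v)} (1/c)𝟙[y_u = y_v] ∈ [0,1] (in particular Σᵢ Σ_{u∈N₂(v)} 𝟙[y_u = i] ≤ c suffices for the cross terms). -/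

import Mathlib

open Finset in
/-- Key matrix inequality (Eq. 27) of GraphACL Theorem 3:
‖Y − A₂C‖_F² ≤ N + (M²/N)·Σ_v Σ_{u∈N₂(v)} 𝟙[y_u ≠ y_v]. -/
theorem label_prediction_error_bound
    (N M c : ℕ) (hM : 0 < M) (hc : N = M * c) (hN : 0 < N)
    (y : Fin N → Fin M)
    (hbal : ∀ i : Fin M, (Finset.univ.filter (fun v => y v = i)).card = c)
    (N₂ : Fin N → Finset (Fin N))
    (hnb : ∀ v (i : Fin M),
      (∑ u ∈ N₂ v, (if y u = i then (1 : ℝ) else 0)) ≤ (c : ℝ))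
    (Y C : Matrix (Fin N) (Fin M) ℝ)
    (A₂ : Matrix (Fin N) (Fin N) ℝ)
    (hY : ∀ v i, Y v i = if y v = i then 1 else 0)
    (hC : ∀ v i, C v i = if y v = i then 1 / (c : ℝ) else 0)
    (hA₂ : ∀ v u, A₂ v u = if u ∈ N₂ v then 1 else 0) :
    ∑ v, ∑ i, ((Y - A₂ * C) v i) ^ 2 ≤
      (N : ℝ) + ((M : ℝ) ^ 2 / (N : ℝ)) *
        ∑ v, ∑ u ∈ N₂ v, (if y u ≠ y v then (1 : ℝ) else 0) := by
  have hc0 : 0 < c := by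
    rcases Nat.eq_zero_or_pos c with h | h
    · subst h; omega
    · exact h
  have hcR : (0 : ℝ) < c := by exact_mod_cast hc0
  have hNR : (0 : ℝ) < N := by exact_mod_cast hN
  have hMR : (1 : ℝ) ≤ M := by exact_mod_cast hM
  -- per-vertex bound
  have key : ∀ v, ∑ i, ((Y - A₂ * C) v i) ^ 2 ≤
      1 + ((M : ℝ) / c) * ∑ u ∈ N₂ v, (if y u ≠ y v then (1 : ℝ) else 0) := by
    intro v
    set s : Fin M → ℝ := fun i => ∑ u ∈ N₂ v, (if y u = i then (1 : ℝ) else 0) with hs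
    have hs0 : ∀ i, 0 ≤ s i := fun i =>
      Finset.sum_nonneg (fun u _ => by positivity)
    have hentry : ∀ i, (Y - A₂ * C) v i = (if y v = i then 1 else 0) - s i / c := by
      intro i
      simp only [Matrix.sub_apply, Matrix.mul_apply, hY, hA₂, hC]
      congr 1
      have h1 : ∀ u, (if u ∈ N₂ v then (1 : ℝ) else 0) *
          (if y u = i then 1 / (c : ℝ) else 0) =
          if u ∈ N₂ v then (if y u = i then (1 : ℝ) else 0) / c else 0 := by
        intro u; split <;> split <;> simp
      rw [Finset.sum_congr rfl fun u _ => h1 u, Finset.sum_ite_mem, Finset.univ_inter,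
        ← Finset.sum_div]
    have hsplit : ∑ i, ((Y - A₂ * C) v i) ^ 2 =
        (1 - s (y v) / c) ^ 2 + ∑ i ∈ Finset.univ.erase (y v), (s i / c) ^ 2 := by
      rw [Finset.sum_congr rfl fun i _ => by rw [hentry i]]
      rw [← Finset.add_sum_erase _ _ (Finset.mem_univ (y v))]
      congr 1
      · simp
      · apply Finset.sum_congr rfl
        intro i hi
        have : y v ≠ i := (Finset.ne_of_mem_erase hi).symm
        simp [this]
    rw [hsplit]
    have h1 : (1 - s (y v) / c) ^ 2 ≤ 1 := by
      have ha : s (y v) / c ≤ 1 := by rw [div_le_one hcR]; exact hnb v (y v)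
      have hb : 0 ≤ s (y v) / c := div_nonneg (hs0 _) hcR.le
      nlinarith
    have h2 : ∑ i ∈ Finset.univ.erase (y v), (s i / c) ^ 2 ≤
        ∑ i ∈ Finset.univ.erase (y v), s i / c := by
      apply Finset.sum_le_sum
      intro i _
      have ha : s i / c ≤ 1 := by rw [div_le_one hcR]; exact hnb v i
      have hb : 0 ≤ s i / c := div_nonneg (hs0 _) hcR.le
      nlinarith
    have h3 : ∑ i ∈ Finset.univ.erase (y v), s i =
        ∑ u ∈ N₂ v, (if y u ≠ y v then (1 : ℝ) else 0) := by
      rw [hs]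
      rw [Finset.sum_comm]
      apply Finset.sum_congr rfl
      intro u _
      rw [Finset.sum_ite_eq]
      simp [Finset.mem_erase]
    have hh0 : 0 ≤ ∑ u ∈ N₂ v, (if y u ≠ y v then (1 : ℝ) else 0) :=
      Finset.sum_nonneg (fun u _ => by positivity)
    have h4 : ∑ i ∈ Finset.univ.erase (y v), s i / c ≤
        ((M : ℝ) / c) * ∑ u ∈ N₂ v, (if y u ≠ y v then (1 : ℝ) else 0) := by
      rw [← Finset.sum_div, h3, div_mul_eq_mul_div, div_le_div_iff_of_pos_right hcR]
      nlinarith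
    linarith
  calc ∑ v, ∑ i, ((Y - A₂ * C) v i) ^ 2
      ≤ ∑ v : Fin N, (1 + ((M : ℝ) / c) *
          ∑ u ∈ N₂ v, (if y u ≠ y v then (1 : ℝ) else 0)) :=
        Finset.sum_le_sum (fun v _ => key v)
    _ = (N : ℝ) + ((M : ℝ) / c) *
          ∑ v, ∑ u ∈ N₂ v, (if y u ≠ y v then (1 : ℝ) else 0) := by
        rw [Finset.sum_add_distrib, ← Finset.mul_sum]
        simp
    _ = (N : ℝ) + ((M : ℝ) ^ 2 / (N : ℝ)) *
          ∑ v, ∑ u ∈ N₂ v, (if y u ≠ y v then (1 : ℝ) else 0) := by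
        have : ((M : ℝ) / c) = ((M : ℝ) ^ 2 / (N : ℝ)) := by
          have hNc : (N : ℝ) = (M : ℝ) * c := by exact_mod_cast hc
          field_simp [hNc]
          ring_nf
          linarith
        rw [this]
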